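/- arXiv:2010.04597 — 2 statements merged into one kernel-verified Lean document; each statement's English description precedes it below -/
import Mathlib

section
/- Let H be a real Hilbert space, X ⊆ H nonempty closed convex, A : H → H pseudo-monotone, h* a solution of VI(A,X), w ∈ H, τ > 0, and y = P_X(w − τ A(w)). Then ‖y − h*‖² ≤ ‖w − h*‖² − ‖y − w‖² − 2τ⟨A(w) − A(y), y − h*⟩. -/
open RealInnerProductSpace

theorem stmt_13 {H : Type*} [NormedAddCommGroup H] [InnerProductSpace ℝ H]
    (X : Set H) (hne : X.Nonempty) (hclosed : IsClosed X) (hconv : Convex ℝ X)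
    (A : H → H)
    (hpseudo : ∀ u v : H, 0 ≤ ⟪A u, v - u⟫ → 0 ≤ ⟪A v, v - u⟫)
    (hstar : H) (hmem : hstar ∈ X)
    (hsol : ∀ x ∈ X, 0 ≤ ⟪A hstar, x - hstar⟫)
    (w : H) (τ : ℝ) (hτ : 0 < τ) (y : H) (hy : y ∈ X)
    (hproj : ∀ u ∈ X, ‖(w - τ • A w) - y‖ ≤ ‖(w - τ • A w) - u‖) :
    ‖y - hstar‖ ^ 2 ≤
      ‖w - hstar‖ ^ 2 - ‖y - w‖ ^ 2 - 2 * τ * ⟪A w - A y, y - hstar⟫ := by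
  set z := w - τ • A w with hz
  have hinf : ‖z - y‖ = ⨅ u : X, ‖z - u‖ := by
    haveI : Nonempty X := ⟨⟨y, hy⟩⟩
    refine le_antisymm (le_ciInf fun u => hproj u u.2)
      (ciInf_le ⟨0, fun _ ⟨_, h⟩ => h ▸ norm_nonneg _⟩ (⟨y, hy⟩ : X))
  have hvar : ⟪z - y, hstar - y⟫ ≤ 0 :=
    (norm_eq_iInf_iff_real_inner_le_zero hconv hy).mp hinf hstar hmem
  -- ⟪w - y, y - hstar⟫ ≥ τ * ⟪A w, y - hstar⟫
  have h1 : τ * ⟪A w, y - hstar⟫ ≤ ⟪w - y, y - hstar⟫ := by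
    have : ⟪z - y, hstar - y⟫ = -⟪w - y, y - hstar⟫ + τ * ⟪A w, y - hstar⟫ := by
      rw [hz]
      simp [inner_sub_left, inner_sub_right, real_inner_smul_left]
      ring
    nlinarith [hvar]
  have h2 : 0 ≤ ⟪A y, y - hstar⟫ :=
    hpseudo hstar y (hsol y hy)
  have hexp : ‖y - hstar‖ ^ 2 =
      ‖w - hstar‖ ^ 2 - ‖y - w‖ ^ 2 - 2 * ⟪w - y, y - hstar⟫ := by
    have n1 := real_inner_self_eq_norm_sq (y - hstar)
    have n2 := real_inner_self_eq_norm_sq (w - hstar)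
    have n3 := real_inner_self_eq_norm_sq (y - w)
    simp only [inner_sub_left, inner_sub_right] at n1 n2 n3 ⊢
    rw [← n1, ← n2, ← n3]
    have c1 := real_inner_comm y hstar
    have c2 := real_inner_comm w hstar
    have c3 := real_inner_comm y w
    linarith
  have hAw : ⟪A w - A y, y - hstar⟫ = ⟪A w, y - hstar⟫ - ⟪A y, y - hstar⟫ := by
    rw [inner_sub_left]
  nlinarith [h1, h2, hτ.le]
end

section
/- Let H be a real Hilbert space, X ⊆ H nonempty closed convex, A : H → H pseudo-monotone, h* a solution of VI(A,X), λ ∈ (0,1), μ ∈ (0,1), τ_n, τ_{n+1} > 0, w_n ∈ H, y_n = P_X(w_n − τ_n A(w_n)), and h_{n+1} = (1−λ)w_n + λ(y_n + τ_n(A(w_n) − A(y_n))). Assume ‖A(w_n) − A(y_n)‖ ≤ (μ/τ_{n+1})‖w_n − y_n‖. Then ‖h_{n+1} − h*‖² ≤ ‖w_n − h*‖² − λ(1 − μτ_n/τ_{n+1})(2 − λ + λμτ_n/τ_{n+1})‖y_n − w_n‖². -/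
set_option maxHeartbeats 1000000


open RealInnerProductSpace

theorem stmt_14 {H : Type*} [NormedAddCommGroup H] [InnerProductSpace ℝ H]
    (X : Set H) (hne : X.Nonempty) (hclosed : IsClosed X) (hconv : Convex ℝ X)
    (A : H → H)
    (hpseudo : ∀ u v : H, 0 ≤ ⟪A u, v - u⟫ → 0 ≤ ⟪A v, v - u⟫)
    (hstar : H) (hmem : hstar ∈ X)
    (hsol : ∀ x ∈ X, 0 ≤ ⟪A hstar, x - hstar⟫)
    (lam μ τn τn1 : ℝ) (hlam0 : 0 < lam) (hlam1 : lam < 1)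
    (hμ0 : 0 < μ) (hμ1 : μ < 1) (hτn : 0 < τn) (hτn1 : 0 < τn1)
    (wn yn : H) (hyn : yn ∈ X)
    (hproj : ∀ u ∈ X, ‖(wn - τn • A wn) - yn‖ ≤ ‖(wn - τn • A wn) - u‖)
    (hstep : ‖A wn - A yn‖ ≤ μ / τn1 * ‖wn - yn‖)
    (hn1 : H)
    (hupdate : hn1 = (1 - lam) • wn + lam • (yn + τn • (A wn - A yn))) :
    ‖hn1 - hstar‖ ^ 2 ≤ ‖wn - hstar‖ ^ 2 -
      lam * (1 - μ * τn / τn1) * (2 - lam + lam * μ * τn / τn1) * ‖yn - wn‖ ^ 2 := by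
  set c : ℝ := μ * τn / τn1 with hc
  have hc0 : 0 < c := by positivity
  set d : H := wn - yn with hd
  set e : H := τn • (A wn - A yn) with he
  -- bound on ‖e‖
  have hebound : ‖e‖ ≤ c * ‖d‖ := by
    have : ‖e‖ = τn * ‖A wn - A yn‖ := by
      rw [he, norm_smul, Real.norm_of_nonneg hτn.le]
    rw [this]
    calc τn * ‖A wn - A yn‖ ≤ τn * (μ / τn1 * ‖wn - yn‖) := by
          exact mul_le_mul_of_nonneg_left hstep hτn.le
      _ = c * ‖d‖ := by rw [hc, hd]; ring
  -- projection variational inequality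
  have hproj' : ∀ u ∈ X, ⟪(wn - τn • A wn) - yn, u - yn⟫ ≤ 0 := by
    have hinf : ‖(wn - τn • A wn) - yn‖ = ⨅ w : X, ‖(wn - τn • A wn) - w‖ := by
      haveI : Nonempty X := ⟨⟨yn, hyn⟩⟩
      apply le_antisymm
      · exact le_ciInf fun w => hproj w w.2
      · exact ciInf_le ⟨0, fun _ ⟨_, h⟩ => h ▸ norm_nonneg _⟩ (⟨yn, hyn⟩ : X)
    exact (norm_eq_iInf_iff_real_inner_le_zero hconv hyn).mp hinf
  have hvi : ⟪(wn - τn • A wn) - yn, hstar - yn⟫ ≤ 0 := hproj' hstar hmem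
  -- pseudo-monotonicity
  have hps : 0 ≤ ⟪A yn, yn - hstar⟫ := hpseudo hstar yn (hsol yn hyn)
  -- key inequality : ⟪d - e, yn - hstar⟫ ≥ 0
  have hkey : 0 ≤ ⟪d - e, yn - hstar⟫ := by
    have h1 : ⟪d - e, yn - hstar⟫ =
        -⟪(wn - τn • A wn) - yn, hstar - yn⟫ + τn * ⟪A yn, yn - hstar⟫ := by
      rw [hd, he]
      simp only [inner_sub_left, inner_sub_right, inner_smul_left, inner_neg_left,
        inner_neg_right, RCLike.ofReal_real_eq_id, id_eq, starRingEnd_apply, star_trivial]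
      ring
    rw [h1]
    have := mul_nonneg hτn.le hps
    linarith
  -- rewrite hn1 - hstar
  have hrw : hn1 - hstar = (wn - hstar) - lam • (d - e) := by
    rw [hupdate, hd, he]
    module
  -- expand the square
  have hexp : ‖hn1 - hstar‖ ^ 2 =
      ‖wn - hstar‖ ^ 2 - 2 * lam * ⟪wn - hstar, d - e⟫ + lam ^ 2 * ‖d - e‖ ^ 2 := by
    rw [hrw, @norm_sub_sq_real, real_inner_smul_right, norm_smul,
      Real.norm_of_nonneg hlam0.le, mul_pow]
    ring
  have hsplit : ⟪wn - hstar, d - e⟫ = ⟪d, d - e⟫ + ⟪yn - hstar, d - e⟫ := by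
    rw [← inner_add_left]; congr 1; rw [hd]; abel
  have h2 : ⟪d, d - e⟫ = ‖d‖ ^ 2 - ⟪d, e⟫ := by
    rw [inner_sub_right, real_inner_self_eq_norm_sq]
  have h3 : ‖d - e‖ ^ 2 = ‖d‖ ^ 2 - 2 * ⟪d, e⟫ + ‖e‖ ^ 2 := by
    rw [@norm_sub_sq_real]
  have hde : ⟪d, e⟫ ≤ c * ‖d‖ ^ 2 := by
    calc ⟪d, e⟫ ≤ ‖d‖ * ‖e‖ := real_inner_le_norm d e
      _ ≤ ‖d‖ * (c * ‖d‖) := mul_le_mul_of_nonneg_left hebound (norm_nonneg d)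
      _ = c * ‖d‖ ^ 2 := by ring
  have he2 : ‖e‖ ^ 2 ≤ c ^ 2 * ‖d‖ ^ 2 := by
    have := mul_self_le_mul_self (norm_nonneg e) hebound
    nlinarith [norm_nonneg e, norm_nonneg d]
  have hkey' : 0 ≤ ⟪yn - hstar, d - e⟫ := by
    rwa [real_inner_comm] at hkey
  have hdnorm : ‖yn - wn‖ = ‖d‖ := by rw [hd, ← norm_neg]; congr 1; abel
  rw [hexp, hsplit, h2, h3, hdnorm,
    show lam * μ * τn / τn1 = lam * c by rw [hc]; ring]
  have hlam2 : 0 < 2 * lam - 2 * lam ^ 2 := by nlinarith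
  nlinarith [mul_le_mul_of_nonneg_left hde hlam2.le,
    mul_le_mul_of_nonneg_left he2 (sq_nonneg lam),
    mul_nonneg (mul_nonneg (by norm_num : (0:ℝ) ≤ 2) hlam0.le) hkey']
end
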